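/- Let n ≥ 3, let W be a 4-tensor on ℝⁿ with curvature symmetries, satisfying the first Bianchi identity, and totally trace-free, and let B be a real symmetric trace-free n×n matrix. Then |Σ_{i,j,k,l} W_{kijl} B_{ij} B_{kl}| ≤ √((n−2)/(2(n−1))) · ‖W‖ · ‖B‖². -/

import Mathlib

section HuiskenAux

variable {I : Type*} [Fintype I] [DecidableEq I] {M : Type*} [AddCommMonoid M]

omit [DecidableEq I] in
lemma sum4_flat (f : I → I → I → I → M) :
    ∑ p : I×I×I×I, f p.1 p.2.1 p.2.2.1 p.2.2.2 = ∑ i, ∑ j, ∑ k, ∑ l, f i j k l := by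
  simp [Fintype.sum_prod_type]

omit [DecidableEq I] in
lemma sum4_reindex (f : I → I → I → I → M) (e : (I×I×I×I) ≃ (I×I×I×I)) :
    ∑ p : I×I×I×I, f (e p).1 (e p).2.1 (e p).2.2.1 (e p).2.2.2
      = ∑ i, ∑ j, ∑ k, ∑ l, f i j k l := by
  rw [Equiv.sum_comp e (fun p : I×I×I×I => f p.1 p.2.1 p.2.2.1 p.2.2.2)]
  simp [Fintype.sum_prod_type]

omit [DecidableEq I] in
/-- `Σ f k i j l = Σ f i j k l` -/
lemma sum4_r1 (f : I → I → I → I → M) :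
    ∑ i, ∑ j, ∑ k, ∑ l, f k i j l = ∑ i, ∑ j, ∑ k, ∑ l, f i j k l := by
  rw [← sum4_flat (fun i j k l => f k i j l)]
  exact sum4_reindex f ⟨fun p => (p.2.2.1, p.1, p.2.1, p.2.2.2),
    fun p => (p.2.1, p.2.2.1, p.1, p.2.2.2),
    by rintro ⟨a,b,c,d⟩; rfl, by rintro ⟨a,b,c,d⟩; rfl⟩

omit [DecidableEq I] in
/-- `Σ f i k l j = Σ f i j k l` -/
lemma sum4_r2 (f : I → I → I → I → M) :
    ∑ i, ∑ j, ∑ k, ∑ l, f i k l j = ∑ i, ∑ j, ∑ k, ∑ l, f i j k l := by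
  rw [← sum4_flat (fun i j k l => f i k l j)]
  exact sum4_reindex f ⟨fun p => (p.1, p.2.2.1, p.2.2.2, p.2.1),
    fun p => (p.1, p.2.2.2, p.2.1, p.2.2.1),
    by rintro ⟨a,b,c,d⟩; rfl, by rintro ⟨a,b,c,d⟩; rfl⟩

omit [DecidableEq I] in
/-- `Σ f l j k i = Σ f i j k l` -/
lemma sum4_r3 (f : I → I → I → I → M) :
    ∑ i, ∑ j, ∑ k, ∑ l, f l j k i = ∑ i, ∑ j, ∑ k, ∑ l, f i j k l := by
  rw [← sum4_flat (fun i j k l => f l j k i)]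
  exact sum4_reindex f ⟨fun p => (p.2.2.2, p.2.1, p.2.2.1, p.1),
    fun p => (p.2.2.2, p.2.1, p.2.2.1, p.1),
    by rintro ⟨a,b,c,d⟩; rfl, by rintro ⟨a,b,c,d⟩; rfl⟩

omit [DecidableEq I] in
/-- swap the two innermost of three sums -/
lemma sum3_swap23 (f : I → I → I → M) :
    ∑ i, ∑ j, ∑ k, f i j k = ∑ i, ∑ k, ∑ j, f i j k :=
  Finset.sum_congr rfl fun _ _ => Finset.sum_comm

omit [DecidableEq I] in
/-- rotate three sums: `Σi Σj Σk f i j k = Σj Σk Σi f i j k` -/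
lemma sum3_rot (f : I → I → I → M) :
    ∑ i, ∑ j, ∑ k, f i j k = ∑ j, ∑ k, ∑ i, f i j k :=
  Finset.sum_comm.trans (Finset.sum_congr rfl fun _ _ => Finset.sum_comm)

end HuiskenAux

set_option maxHeartbeats 2000000 in
/-- Huisken's estimate `|W_{kijl} B_{ij} B_{kl}| ≤ √((n−2)/(2(n−1))) ‖W‖ ‖B‖²`
for a Weyl-type tensor `W` and a symmetric trace-free matrix `B`. -/
theorem stmt_4 (n : ℕ) (hn : 3 ≤ n)
    (W : Fin n → Fin n → Fin n → Fin n → ℝ)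
    (hanti1 : ∀ i j k l, W i j k l = -W j i k l)
    (hanti2 : ∀ i j k l, W i j k l = -W i j l k)
    (hpair : ∀ i j k l, W i j k l = W k l i j)
    (hbianchi : ∀ i j k l, W i j k l + W i k l j + W i l j k = 0)
    (htrfree : ∀ j l, ∑ i, W i j i l = 0)
    (B : Matrix (Fin n) (Fin n) ℝ) (hB : B.IsSymm) (htrB : B.trace = 0) :
    |∑ i, ∑ j, ∑ k, ∑ l, W k i j l * B i j * B k l| ≤
      Real.sqrt (((n : ℝ) - 2) / (2 * ((n : ℝ) - 1))) *
        Real.sqrt (∑ i, ∑ j, ∑ k, ∑ l, (W i j k l) ^ 2) *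
        (∑ i, ∑ j, (B i j) ^ 2) := by
  set N : ℝ := (n : ℝ) with hNdef
  set x : ℝ := ∑ i, ∑ j, (B i j)^2 with hxdef
  set P : ℝ := ∑ i, ∑ j, ∑ k, ∑ l, W k i j l * B i j * B k l with hPdef
  set δ : Fin n → Fin n → ℝ := fun i j => if i = j then (1:ℝ) else 0 with hδdef
  set C : Fin n → Fin n → ℝ := fun i j => ∑ k, B i k * B k j with hCdef
  set h : Fin n → Fin n → ℝ := fun i j => C i j - x / N * δ i j with hhdef
  set w : ℝ := ∑ i, ∑ j, (h i j)^2 with hwdef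
  set a : ℝ := 1 / (N - 2) with hadef
  set c : ℝ := x / (N * (N - 1)) with hcdef
  set T : Fin n → Fin n → Fin n → Fin n → ℝ :=
    fun i j k l => B i k * B j l - B i l * B j k with hTdef
  set G : Fin n → Fin n → Fin n → Fin n → ℝ :=
    fun i j k l => h i k * δ j l + h j l * δ i k - h i l * δ j k - h j k * δ i l with hGdef
  set D : Fin n → Fin n → Fin n → Fin n → ℝ :=
    fun i j k l => δ i k * δ j l - δ i l * δ j k with hDdef
  set Z : Fin n → Fin n → Fin n → Fin n → ℝ :=
    fun i j k l => T i j k l + a * G i j k l + c * D i j k l with hZdef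
  clear_value N x P δ C h w a c T G D Z
  have Bsym : ∀ i j, B i j = B j i := fun i j => hB.apply j i
  have trB : ∑ i, B i i = 0 := by simpa [Matrix.trace, Matrix.diag] using htrB
  have hN : (3 : ℝ) ≤ N := by rw [hNdef]; exact_mod_cast hn
  have hx0 : 0 ≤ x := by
    rw [hxdef]
    exact Finset.sum_nonneg fun _ _ => Finset.sum_nonneg fun _ _ => sq_nonneg _
  have Csym : ∀ i j, C j i = C i j := by
    intro i j
    rw [hCdef]
    exact Finset.sum_congr rfl fun k _ => by rw [Bsym j k, Bsym k i]; ring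
  have trC : ∑ i, C i i = x := by
    rw [hCdef, hxdef]
    exact Finset.sum_congr rfl fun i _ =>
      Finset.sum_congr rfl fun k _ => by rw [← Bsym i k, sq]
  have hw0 : 0 ≤ w := by
    rw [hwdef]
    exact Finset.sum_nonneg fun _ _ => Finset.sum_nonneg fun _ _ => sq_nonneg _
  have hNn0 : N ≠ 0 := by linarith
  have hδδ : ∑ i : Fin n, δ i i = N := by simp [hδdef, hNdef]
  have trh : ∑ i, h i i = 0 := by
    rw [hhdef]
    simp only
    rw [Finset.sum_sub_distrib, trC, ← Finset.mul_sum, hδδ]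
    field_simp
    ring
  have hδh : ∑ i, ∑ j, δ i j * h i j = 0 := by simpa [hδdef] using trh
  have hδ2N : ∑ i, ∑ j, (δ i j)^2 = N := by simp [hδdef, sq, hNdef]
  have hCid : ∀ i j, C i j = h i j + x/N * δ i j := fun i j => by rw [hhdef]; ring
  have hCh : ∑ i, ∑ j, C i j * h i j = w := by
    rw [Finset.sum_congr rfl fun i (_ : i ∈ Finset.univ) => Finset.sum_congr rfl
      fun j (_ : j ∈ Finset.univ) =>
        (show C i j * h i j = (h i j)^2 + x/N*(δ i j * h i j) by rw [hCid i j]; ring)]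
    simp only [Finset.sum_add_distrib, ← Finset.mul_sum]
    rw [hδh, ← hwdef]
    ring
  have hwx : ∑ i, ∑ j, (C i j)^2 = w + x^2 / N := by
    rw [Finset.sum_congr rfl fun i (_ : i ∈ Finset.univ) => Finset.sum_congr rfl
      fun j (_ : j ∈ Finset.univ) =>
        (show (C i j)^2 = (h i j)^2 + 2*(x/N)*(δ i j * h i j) + (x/N)^2*(δ i j)^2
          by rw [hCid i j]; ring)]
    simp only [Finset.sum_add_distrib, ← Finset.mul_sum]
    rw [hδh, hδ2N, ← hwdef]
    field_simp
    ring
  -- auxiliary traces of W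
  have t2 : ∀ i k, ∑ j, W i j k j = 0 := by
    intro i k
    have : ∀ j, W i j k j = W j i j k := by
      intro j; rw [hanti1 i j k j, hanti2 j i k j]; ring
    rw [Finset.sum_congr rfl fun j _ => this j]
    exact htrfree i k
  have t3 : ∀ i l, ∑ j, W i j j l = 0 := by
    intro i l
    have : ∀ j, W i j j l = -W j i j l := fun j => hanti1 i j j l
    rw [Finset.sum_congr rfl fun j _ => this j, Finset.sum_neg_distrib, htrfree, neg_zero]
  have t4 : ∀ j k, ∑ i, W i j k i = 0 := by
    intro j k
    have : ∀ i, W i j k i = -W i j i k := fun i => hanti2 i j k i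
    rw [Finset.sum_congr rfl fun i _ => this i, Finset.sum_neg_distrib, htrfree, neg_zero]
  -- a congruence helper for quadruple sums
  have congr4 : ∀ (f g : Fin n → Fin n → Fin n → Fin n → ℝ),
      (∀ i j k l, f i j k l = g i j k l) →
      ∑ i, ∑ j, ∑ k, ∑ l, f i j k l = ∑ i, ∑ j, ∑ k, ∑ l, g i j k l := fun f g hfg =>
    Finset.sum_congr rfl fun i _ => Finset.sum_congr rfl fun j _ =>
      Finset.sum_congr rfl fun k _ => Finset.sum_congr rfl fun l _ => hfg i j k l
  -- Step 1: Bianchi pairing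
  have bian0 : ∑ i, ∑ j, ∑ k, ∑ l, (W i j k l * (B i l * B j k)
      + W i k l j * (B i l * B j k) + W i l j k * (B i l * B j k)) = 0 := by
    have pt0 : ∀ i j k l : Fin n, W i j k l * (B i l * B j k)
        + W i k l j * (B i l * B j k) + W i l j k * (B i l * B j k) = 0 := by
      intro i j k l
      rw [← add_mul, ← add_mul, hbianchi, zero_mul]
    simp only [pt0, Finset.sum_const_zero]
  simp only [Finset.sum_add_distrib] at bian0
  have hT1 : ∑ i, ∑ j, ∑ k, ∑ l, W i j k l * (B i l * B j k) = P := by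
    have h1 : ∑ i, ∑ j, ∑ k, ∑ l, W k i j l * (B k l * B i j)
        = ∑ i, ∑ j, ∑ k, ∑ l, W i j k l * (B i l * B j k) :=
      sum4_r1 (fun a b c d => W a b c d * (B a d * B b c))
    have h2 : P = ∑ i, ∑ j, ∑ k, ∑ l, W k i j l * (B k l * B i j) := by
      rw [hPdef]
      exact congr4 _ _ fun i j k l => by ring
    rw [h2, h1]
  have hT3 : ∑ i, ∑ j, ∑ k, ∑ l, W i l j k * (B i l * B j k) = 0 := by
    have h1 : ∑ i, ∑ j, ∑ k, ∑ l, W l i j k * (B l i * B j k)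
        = ∑ i, ∑ j, ∑ k, ∑ l, W i l j k * (B i l * B j k) :=
      sum4_r3 (fun a b c d => W a d b c * (B a d * B b c))
    have h2 : ∑ i, ∑ j, ∑ k, ∑ l, W l i j k * (B l i * B j k)
        = - ∑ i, ∑ j, ∑ k, ∑ l, W i l j k * (B i l * B j k) := by
      rw [congr4 _ _ fun i j k l => (by
        rw [hanti1 l i j k, ← Bsym i l]; ring : W l i j k * (B l i * B j k)
          = -(W i l j k * (B i l * B j k)))]
      simp [Finset.sum_neg_distrib]
    have := h1.symm.trans h2
    linarith
  have hT2 : ∑ i, ∑ j, ∑ k, ∑ l, W i k l j * (B i l * B j k)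
      = ∑ i, ∑ j, ∑ k, ∑ l, W i j k l * (B i k * B j l) := by
    have h1 : ∑ i, ∑ j, ∑ k, ∑ l, W i k l j * (B i l * B k j)
        = ∑ i, ∑ j, ∑ k, ∑ l, W i j k l * (B i k * B j l) :=
      sum4_r2 (fun a b c d => W a b c d * (B a c * B b d))
    rw [← h1]
    exact congr4 _ _ fun i j k l => by rw [Bsym j k]
  have hS : ∑ i, ∑ j, ∑ k, ∑ l, W i j k l * (B i k * B j l) = -P := by
    rw [hT1, hT2] at bian0
    linarith
  have step1 : ∑ i, ∑ j, ∑ k, ∑ l, W i j k l * T i j k l = -2 * P := by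
    rw [congr4 _ _ fun i j k l => (by rw [hTdef]; ring :
      W i j k l * T i j k l
        = W i j k l * (B i k * B j l) - W i j k l * (B i l * B j k))]
    simp only [Finset.sum_sub_distrib]
    rw [hS, hT1]
    ring
  -- Step 2: W is orthogonal to the trace corrections
  have hWG : ∑ i, ∑ j, ∑ k, ∑ l, W i j k l * G i j k l = 0 := by
    simp only [hGdef, hδdef]
    ring_nf
    simp [mul_ite, ite_mul, Finset.sum_ite_eq, Finset.sum_sub_distrib,
      Finset.sum_add_distrib, ← Finset.mul_sum, ← Finset.sum_mul]
    have hR1 : ∑ p : Fin n, ∑ q : Fin n, ∑ r : Fin n, W p q r q * h p r = 0 := by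
      rw [sum3_swap23 fun p q r => W p q r q * h p r]
      rw [Finset.sum_congr rfl fun p (_ : p ∈ Finset.univ) => Finset.sum_congr rfl
        fun r (_ : r ∈ Finset.univ) =>
          (by rw [← Finset.sum_mul, t2, zero_mul] : ∑ q, W p q r q * h p r = 0)]
      simp
    have hR2 : ∑ p : Fin n, ∑ q : Fin n, ∑ r : Fin n, W p q p r * h q r = 0 := by
      rw [sum3_rot fun p q r => W p q p r * h q r]
      rw [Finset.sum_congr rfl fun q (_ : q ∈ Finset.univ) => Finset.sum_congr rfl
        fun r (_ : r ∈ Finset.univ) =>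
          (by rw [← Finset.sum_mul, htrfree, zero_mul] : ∑ p, W p q p r * h q r = 0)]
      simp
    have hR3 : ∑ p : Fin n, ∑ q : Fin n, ∑ r : Fin n, W p q q r * h p r = 0 := by
      rw [sum3_swap23 fun p q r => W p q q r * h p r]
      rw [Finset.sum_congr rfl fun p (_ : p ∈ Finset.univ) => Finset.sum_congr rfl
        fun r (_ : r ∈ Finset.univ) =>
          (by rw [← Finset.sum_mul, t3, zero_mul] : ∑ q, W p q q r * h p r = 0)]
      simp
    have hR4 : ∑ p : Fin n, ∑ q : Fin n, ∑ r : Fin n, W p q r p * h q r = 0 := by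
      rw [sum3_rot fun p q r => W p q r p * h q r]
      rw [Finset.sum_congr rfl fun q (_ : q ∈ Finset.univ) => Finset.sum_congr rfl
        fun r (_ : r ∈ Finset.univ) =>
          (by rw [← Finset.sum_mul, t4, zero_mul] : ∑ p, W p q r p * h q r = 0)]
      simp
    rw [hR1, hR2, hR3, hR4]
    ring
  have hWD : ∑ i, ∑ j, ∑ k, ∑ l, W i j k l * D i j k l = 0 := by
    simp only [hDdef, hδdef]
    ring_nf
    simp [mul_ite, ite_mul, Finset.sum_ite_eq, Finset.sum_sub_distrib, Finset.sum_add_distrib]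
    have hA : ∑ i, ∑ j, W i j i j = 0 := by
      rw [Finset.sum_comm]
      simp [htrfree]
    have hBq : ∑ i, ∑ j, W i j j i = 0 := by
      rw [Finset.sum_congr rfl fun i (_ : i ∈ Finset.univ) => Finset.sum_congr rfl
        fun j (_ : j ∈ Finset.univ) => hanti2 i j j i]
      simp [hA]
    rw [hA, hBq]
    ring
  have step2 : ∑ i, ∑ j, ∑ k, ∑ l, W i j k l * Z i j k l = -2 * P := by
    rw [congr4 _ _ fun i j k l => (by rw [hZdef]; ring :
      W i j k l * Z i j k l = W i j k l * T i j k l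
        + a * (W i j k l * G i j k l) + c * (W i j k l * D i j k l))]
    simp only [Finset.sum_add_distrib, ← Finset.mul_sum]
    rw [step1, hWG, hWD]
    ring
  -- Step 4: the norm of Z
  have e1 : ∑ i, ∑ j, ∑ k, ∑ l, (T i j k l)^2 = 2*x^2 - 2*(w + x^2/N) := by
    simp only [hTdef]
    ring_nf
    simp only [Finset.sum_add_distrib, Finset.sum_neg_distrib, ← Finset.sum_mul,
      ← Finset.mul_sum]
    have hCrow : ∀ p q : Fin n, ∑ t, B p t * B q t = C p q := by
      intro p q
      rw [hCdef]
      simp only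
      exact Finset.sum_congr rfl fun t _ => by rw [Bsym q t]
    have hK1 : ∑ p : Fin n, ∑ q : Fin n, ∑ r : Fin n,
        (∑ t, B p r * B q t * B p t) * B q r = w + x^2/N := by
      have inner1 : ∀ p q r : Fin n, (∑ t, B p r * B q t * B p t) = B p r * C q p := by
        intro p q r
        rw [← hCrow q p, Finset.mul_sum]
        exact Finset.sum_congr rfl fun t _ => by ring
      rw [Finset.sum_congr rfl fun p (_ : p ∈ Finset.univ) => Finset.sum_congr rfl
        fun q (_ : q ∈ Finset.univ) => Finset.sum_congr rfl
        fun r (_ : r ∈ Finset.univ) => by rw [inner1 p q r]]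
      have inner2 : ∀ p q : Fin n, (∑ r, (B p r * C q p) * B q r) = C q p * C p q := by
        intro p q
        rw [← hCrow p q, Finset.mul_sum]
        exact Finset.sum_congr rfl fun r _ => by ring
      rw [Finset.sum_congr rfl fun p (_ : p ∈ Finset.univ) => Finset.sum_congr rfl
        fun q (_ : q ∈ Finset.univ) => inner2 p q]
      rw [Finset.sum_congr rfl fun p (_ : p ∈ Finset.univ) => Finset.sum_congr rfl
        fun q (_ : q ∈ Finset.univ) => (by rw [Csym p q, sq] : C q p * C p q = (C p q)^2)]
      exact hwx
    rw [hK1, ← hxdef]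
    ring
  have e2 : ∑ i, ∑ j, ∑ k, ∑ l, T i j k l * G i j k l = -4*w := by
    simp only [hTdef, hGdef, hδdef]
    ring_nf
    simp [mul_ite, ite_mul, Finset.sum_ite_eq, Finset.sum_sub_distrib,
      Finset.sum_add_distrib, ← Finset.mul_sum, ← Finset.sum_mul, trh, trB]
    have hJ1 : ∑ p : Fin n, ∑ q : Fin n, ∑ r : Fin n, B p r * B q q * h p r = 0 := by
      have inner : ∀ p : Fin n, (∑ q : Fin n, ∑ r : Fin n, B p r * B q q * h p r)
          = (∑ q, B q q) * (∑ r, B p r * h p r) := by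
        intro p
        rw [Finset.sum_mul_sum]
        exact Finset.sum_congr rfl fun q _ => Finset.sum_congr rfl fun r _ => by ring
      rw [Finset.sum_congr rfl fun p (_ : p ∈ Finset.univ) => inner p]
      simp [trB]
    have hJ2 : ∑ p : Fin n, ∑ q : Fin n, ∑ r : Fin n, B p p * B q r * h q r = 0 := by
      have inner : ∀ p : Fin n, (∑ q : Fin n, ∑ r : Fin n, B p p * B q r * h q r)
          = B p p * (∑ q, ∑ r, B q r * h q r) := by
        intro p
        rw [Finset.mul_sum]
        exact Finset.sum_congr rfl fun q _ => by
          rw [Finset.mul_sum]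
          exact Finset.sum_congr rfl fun r _ => by ring
      rw [Finset.sum_congr rfl fun p (_ : p ∈ Finset.univ) => inner p, ← Finset.sum_mul,
        trB, zero_mul]
    have hJ3 : ∑ p : Fin n, ∑ q : Fin n, ∑ r : Fin n, B p q * B q r * h p r = w := by
      rw [sum3_swap23 fun p q r => B p q * B q r * h p r]
      have inner : ∀ p r : Fin n, ∑ q, B p q * B q r * h p r = C p r * h p r := by
        intro p r
        rw [hCdef]
        simp only
        rw [Finset.sum_mul]
      rw [Finset.sum_congr rfl fun p (_ : p ∈ Finset.univ) => Finset.sum_congr rfl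
        fun r (_ : r ∈ Finset.univ) => inner p r]
      exact hCh
    have hJ4 : ∑ p : Fin n, ∑ q : Fin n, ∑ r : Fin n, B p r * B q p * h q r = w := by
      rw [sum3_rot fun p q r => B p r * B q p * h q r]
      have inner : ∀ q r : Fin n, ∑ p, B p r * B q p * h q r = C q r * h q r := by
        intro q r
        rw [hCdef]
        simp only
        rw [Finset.sum_mul]
        exact Finset.sum_congr rfl fun p _ => by ring
      rw [Finset.sum_congr rfl fun q (_ : q ∈ Finset.univ) => Finset.sum_congr rfl
        fun r (_ : r ∈ Finset.univ) => inner q r]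
      exact hCh
    rw [hJ1, hJ2, hJ3, hJ4]
    ring
  have e3 : ∑ i, ∑ j, ∑ k, ∑ l, T i j k l * D i j k l = -2*x := by
    simp only [hTdef, hDdef, hδdef]
    ring_nf
    simp [mul_ite, ite_mul, Finset.sum_ite_eq, Finset.sum_sub_distrib, Finset.sum_add_distrib]
    have hBB0 : ∑ i, ∑ j, B i i * B j j = 0 := by
      rw [← Finset.sum_mul_sum, trB, zero_mul]
    have hBBx : ∑ i, ∑ j, B i j * B j i = x := by
      rw [hxdef]
      exact Finset.sum_congr rfl fun i _ => Finset.sum_congr rfl fun j _ => by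
        rw [← Bsym i j, sq]
    rw [hBB0, hBBx]
    ring
  have e4 : ∑ i, ∑ j, ∑ k, ∑ l, (G i j k l)^2 = 4*(N-2)*w := by
    simp only [hGdef, hδdef]
    ring_nf
    simp [mul_pow, sq, mul_ite, ite_mul, Finset.sum_ite_eq, Finset.sum_sub_distrib,
      Finset.sum_add_distrib, ← Finset.mul_sum, trh]
    have hA : ∑ i, ∑ j, h i i * h j j = 0 := by rw [← Finset.sum_mul_sum, trh, zero_mul]
    have hS : ∑ i, ∑ j, h i j * h i j = w := by
      rw [hwdef]
      exact Finset.sum_congr rfl fun i _ => Finset.sum_congr rfl fun j _ => (sq (h i j)).symm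
    have hS' : ∑ i : Fin n, ∑ j : Fin n, h j i * h j i = w := Finset.sum_comm.trans hS
    simp only [← Finset.sum_mul]
    rw [hA, hS, hS', ← hNdef]
    ring
  have e5 : ∑ i, ∑ j, ∑ k, ∑ l, G i j k l * D i j k l = 0 := by
    simp only [hGdef, hDdef, hδdef]
    ring_nf
    simp [mul_ite, ite_mul, Finset.sum_ite_eq, Finset.sum_sub_distrib, Finset.sum_add_distrib,
      ← Finset.mul_sum, trh]
  have e6 : ∑ i, ∑ j, ∑ k, ∑ l, (D i j k l)^2 = 2*N^2 - 2*N := by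
    simp only [hDdef, hδdef]
    ring_nf
    simp [mul_pow, sq, mul_ite, ite_mul, Finset.sum_ite_eq, Finset.sum_sub_distrib,
      Finset.sum_add_distrib, hNdef]
    ring
  have step4 : ∑ i, ∑ j, ∑ k, ∑ l, (Z i j k l)^2 =
      (2*x^2 - 2*(w + x^2/N)) + 2*a*(-4*w) + 2*c*(-2*x)
        + a^2*(4*(N-2)*w) + 2*a*c*0 + c^2*(2*N^2 - 2*N) := by
    rw [congr4 _ _ fun i j k l => (by rw [hZdef]; ring : (Z i j k l)^2
      = (T i j k l)^2 + 2*a*(T i j k l * G i j k l) + 2*c*(T i j k l * D i j k l)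
        + a^2*(G i j k l)^2 + 2*a*c*(G i j k l * D i j k l) + c^2*(D i j k l)^2)]
    simp only [Finset.sum_add_distrib, ← Finset.mul_sum]
    rw [e1, e2, e3, e4, e5, e6]
  have step5 : ∑ i, ∑ j, ∑ k, ∑ l, (Z i j k l)^2 ≤ 2*(N-2)/(N-1)*x^2 := by
    rw [step4, hadef, hcdef]
    have h2 : (0:ℝ) < N - 2 := by linarith
    have h1 : (0:ℝ) < N - 1 := by linarith
    have h0 : (0:ℝ) < N := by linarith
    have hq : 0 ≤ (2 + 4/(N-2)) * w :=
      mul_nonneg (by nlinarith [div_nonneg (by norm_num : (0:ℝ) ≤ 4) h2.le]) hw0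
    have key5 : (2*x^2 - 2*(w + x^2/N)) + 2*(1/(N-2))*(-4*w) + 2*(x/(N*(N-1)))*(-2*x)
        + (1/(N-2))^2*(4*(N-2)*w) + 2*(1/(N-2))*(x/(N*(N-1)))*0 + (x/(N*(N-1)))^2*(2*N^2 - 2*N)
        = 2*(N-2)/(N-1)*x^2 - (2 + 4/(N-2)) * w := by
      field_simp
      ring
    rw [key5]
    linarith
  -- Step 3: Cauchy-Schwarz
  have step3 : (∑ i, ∑ j, ∑ k, ∑ l, W i j k l * Z i j k l)^2 ≤
      (∑ i, ∑ j, ∑ k, ∑ l, (W i j k l)^2) * (∑ i, ∑ j, ∑ k, ∑ l, (Z i j k l)^2) := by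
    rw [← sum4_flat (fun i j k l => W i j k l * Z i j k l),
        ← sum4_flat (fun i j k l => (W i j k l)^2),
        ← sum4_flat (fun i j k l => (Z i j k l)^2)]
    exact Finset.sum_mul_sq_le_sq_mul_sq _ _ _
  -- assemble
  have hW2 : (0:ℝ) ≤ ∑ i, ∑ j, ∑ k, ∑ l, (W i j k l)^2 :=
    Finset.sum_nonneg fun _ _ => Finset.sum_nonneg fun _ _ =>
      Finset.sum_nonneg fun _ _ => Finset.sum_nonneg fun _ _ => sq_nonneg _
  have key : P^2 ≤ ((N-2)/(2*(N-1))) * (∑ i, ∑ j, ∑ k, ∑ l, (W i j k l)^2) * x^2 := by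
    have h1 : (0:ℝ) < N - 1 := by linarith
    have hZ2 : (∑ i, ∑ j, ∑ k, ∑ l, W i j k l * Z i j k l)^2 = 4 * P^2 := by
      rw [step2]; ring
    have h4 : 4 * P^2 ≤ (∑ i, ∑ j, ∑ k, ∑ l, (W i j k l)^2) * (2*(N-2)/(N-1)*x^2) :=
      hZ2 ▸ le_trans step3 (mul_le_mul_of_nonneg_left step5 hW2)
    have heq : ((N-2)/(2*(N-1))) * (∑ i, ∑ j, ∑ k, ∑ l, (W i j k l)^2) * x^2 * 4
        = (∑ i, ∑ j, ∑ k, ∑ l, (W i j k l)^2) * (2*(N-2)/(N-1)*x^2) := by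
      field_simp
      ring
    linarith
  calc |P| = Real.sqrt (P^2) := (Real.sqrt_sq_eq_abs P).symm
    _ ≤ Real.sqrt (((N-2)/(2*(N-1))) * (∑ i, ∑ j, ∑ k, ∑ l, (W i j k l)^2) * x^2) :=
        Real.sqrt_le_sqrt key
    _ = Real.sqrt ((N-2)/(2*(N-1))) * Real.sqrt (∑ i, ∑ j, ∑ k, ∑ l, (W i j k l)^2) * x := by
        have hr0 : 0 ≤ (N-2)/(2*(N-1)) := div_nonneg (by linarith) (by linarith)
        rw [Real.sqrt_mul (mul_nonneg hr0 hW2), Real.sqrt_mul hr0, Real.sqrt_sq hx0]
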